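/- arXiv:2403.05071 — 2 statements merged into one kernel-verified Lean document; each statement's English description precedes it below -/
import Mathlib

section
/- If T is a bounded operator on a complex Hilbert space H that is A-invertible in B_A(H) with A-inverse S, then the A-reduced minimum modulus satisfies γ_A(T) ≥ 1/‖S‖_A > 0. -/
open Filter Topology ContinuousLinearMap

variable {H : Type*} [NormedAddCommGroup H] [InnerProductSpace ℂ H] [CompleteSpace H]

/-- The `A`-seminorm `‖x‖_A = ⟨Ax,x⟩^{1/2}`. -/
noncomputable def anorm (A : H →L[ℂ] H) (x : H) : ℝ :=
  Real.sqrt (inner ℂ (A x) x : ℂ).re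

/-- `B_{A^{1/2}}(H)`: the `A`-bounded operators. -/
def MemBAhalf (A T : H →L[ℂ] H) : Prop :=
  ∃ d > 0, ∀ ξ : H, anorm A (T ξ) ≤ d * anorm A ξ

/-- `B_A(H)`: operators admitting an `A`-adjoint. -/
def MemBA (A T : H →L[ℂ] H) : Prop :=
  Set.range (fun x => ContinuousLinearMap.adjoint T (A x)) ⊆ Set.range A

/-- A-invertibility in `B_{A^{1/2}}(H)`. -/
def AInvertibleHalf (A T : H →L[ℂ] H) : Prop :=
  ∃ S : H →L[ℂ] H, S ≠ 0 ∧ MemBAhalf A S ∧ A ∘L T ∘L S = A ∧ A ∘L S ∘L T = A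

/-- A-invertibility in `B_A(H)`. -/
def AInvertibleBA (A T : H →L[ℂ] H) : Prop :=
  ∃ S : H →L[ℂ] H, S ≠ 0 ∧ MemBA A S ∧ A ∘L T ∘L S = A ∧ A ∘L S ∘L T = A

/-- The `A`-approximate point spectrum. -/
def sigmaAapp (A T : H →L[ℂ] H) : Set ℂ :=
  {lam | ∃ x : ℕ → H, (∀ n, anorm A (x n) = 1) ∧
    Tendsto (fun n => anorm A (T (x n) - lam • x n)) atTop (nhds 0)}

/-- The `A`-spectrum. -/
def sigmaA (A T : H →L[ℂ] H) : Set ℂ :=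
  {lam | ¬ AInvertibleHalf A (lam • (1 : H →L[ℂ] H) - T)}

/-- The `A`-numerical range. -/
def WA (A T : H →L[ℂ] H) : Set ℂ :=
  {z | ∃ x : H, anorm A x = 1 ∧ z = (inner ℂ (A (T x)) x : ℂ)}

/-- The `A`-operator seminorm, sup over the closure of the range of `A`. -/
noncomputable def AopnormCl (A T : H →L[ℂ] H) : ℝ :=
  sSup {r | ∃ ξ ∈ closure (Set.range A), anorm A ξ ≤ 1 ∧ r = anorm A (T ξ)}

/-- The `A`-operator seminorm, sup over all vectors of `A`-seminorm at most one. -/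
noncomputable def Aopnorm (A T : H →L[ℂ] H) : ℝ :=
  sSup {r | ∃ ξ : H, anorm A ξ ≤ 1 ∧ r = anorm A (T ξ)}

/-- The `A`-numerical radius. -/
noncomputable def wA (A T : H →L[ℂ] H) : ℝ :=
  sSup {r | ∃ x : H, anorm A x = 1 ∧ r = ‖(inner ℂ (A (T x)) x : ℂ)‖}

/-- The `A`-reduced minimum modulus. -/
noncomputable def gammaA (A T : H →L[ℂ] H) : ℝ :=
  sInf {r | ∃ ξ : H, (∀ y : H, anorm A (T y) = 0 → (inner ℂ (A ξ) y : ℂ) = 0) ∧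
    anorm A ξ = 1 ∧ r = anorm A (T ξ)}

/-- closure of the range of `A` as a submodule. -/
noncomputable def rangeClosure (A : H →L[ℂ] H) : Submodule ℂ H :=
  (LinearMap.range (A : H →ₗ[ℂ] H)).topologicalClosure

noncomputable instance (A : H →L[ℂ] H) : CompleteSpace (rangeClosure A) :=
  (Submodule.isClosed_topologicalClosure _).completeSpace_coe

/-- orthogonal projection onto the closure of the range of `A`, as an operator on `H`. -/
noncomputable def Pcl (A : H →L[ℂ] H) : H →L[ℂ] H :=
  (rangeClosure A).subtypeL ∘L Submodule.orthogonalProjection (rangeClosure A)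


local notation "⟪" x ", " y "⟫" => @inner ℂ H _ x y

lemma anorm_eq (A B : H →L[ℂ] H) (hBB : ∀ x, B (B x) = A x)
    (hBa : ContinuousLinearMap.adjoint B = B) (x : H) : anorm A x = ‖B x‖ := by
  have h1 : ⟪A x, x⟫ = ⟪B x, B x⟫ := by
    rw [← hBB x]
    nth_rewrite 1 [← hBa]
    rw [adjoint_inner_left]
  rw [anorm, h1]
  rw [show (⟪B x, B x⟫).re = RCLike.re ⟪B x, B x⟫ from rfl]
  rw [inner_self_eq_norm_sq, Real.sqrt_sq (norm_nonneg _)]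

omit [CompleteSpace H] in
lemma mem_rangeClosure_apply (A : H →L[ℂ] H) (x : H) : A x ∈ rangeClosure A :=
  Submodule.le_topologicalClosure _ (LinearMap.mem_range_self (A : H →ₗ[ℂ] H) x)

lemma apply_eq_zero_of_orthogonal (A : H →L[ℂ] H) (hAa : ContinuousLinearMap.adjoint A = A)
    {v : H} (hv : v ∈ (rangeClosure A)ᗮ) : A v = 0 := by
  have h1 : ⟪A v, A v⟫ = ⟪v, A (A v)⟫ := by
    nth_rewrite 1 [← hAa]; rw [adjoint_inner_left]
  have h2 : ⟪v, A (A v)⟫ = 0 :=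
    (Submodule.mem_orthogonal' _ _).1 hv _ (mem_rangeClosure_apply A (A v))
  exact inner_self_eq_zero.1 (h1.trans h2)

lemma B_eq_zero_of_apply_eq_zero (A B : H →L[ℂ] H) (hBB : ∀ x, B (B x) = A x)
    (hBa : ContinuousLinearMap.adjoint B = B) {v : H} (hv : A v = 0) : B v = 0 := by
  have h1 : ⟪B v, B v⟫ = ⟪v, A v⟫ := by
    nth_rewrite 1 [← hBa]; rw [adjoint_inner_left, hBB]
  exact inner_self_eq_zero.1 (by rw [h1, hv, inner_zero_right])

lemma rangeClosure_inj (A : H →L[ℂ] H) (hAa : ContinuousLinearMap.adjoint A = A)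
    {w : H} (hw : w ∈ rangeClosure A) (hw0 : A w = 0) : w = 0 := by
  have hK : LinearMap.range (A : H →ₗ[ℂ] H) ≤ (ℂ ∙ w)ᗮ := by
    rintro u ⟨y, rfl⟩
    rw [Submodule.mem_orthogonal']
    intro z hz
    obtain ⟨c, rfl⟩ := Submodule.mem_span_singleton.1 hz
    rw [inner_smul_right]
    have h3 : ⟪(A : H →ₗ[ℂ] H) y, w⟫ = 0 := by
      show ⟪A y, w⟫ = 0
      nth_rewrite 1 [← hAa]
      rw [adjoint_inner_left, hw0, inner_zero_right]
    rw [h3, mul_zero]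
  have hle : (LinearMap.range (A : H →ₗ[ℂ] H)).topologicalClosure ≤ (ℂ ∙ w)ᗮ :=
    Submodule.topologicalClosure_minimal _ hK (Submodule.isClosed_orthogonal _)
  have h4 : ⟪w, w⟫ = 0 :=
    (Submodule.mem_orthogonal' _ _).1 (hle hw) w (Submodule.mem_span_singleton_self w)
  exact inner_self_eq_zero.1 h4

set_option synthInstance.maxHeartbeats 1000000
set_option maxHeartbeats 2000000


lemma abound (A S : H →L[ℂ] H) (hA : A.IsPositive) (hS : MemBA A S) :
    ∃ c > 0, ∀ x, anorm A (S x) ≤ c * anorm A x := by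
  classical
  have h0 : 0 ≤ A := (ContinuousLinearMap.nonneg_iff_isPositive A).2 hA
  set B := CFC.sqrt A with hBdef
  have hBmul : B * B = A := CFC.sqrt_mul_sqrt_self A h0
  have hBB : ∀ x, B (B x) = A x := fun x => by rw [← hBmul]; rfl
  have hBa : ContinuousLinearMap.adjoint B = B :=
    isSelfAdjoint_iff'.1 (IsSelfAdjoint.of_nonneg (CFC.sqrt_nonneg A))
  have hAa : ContinuousLinearMap.adjoint A = A := isSelfAdjoint_iff'.1 hA.isSelfAdjoint
  have hanorm : ∀ x, anorm A x = ‖B x‖ := anorm_eq A B hBB hBa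
  have hBxBv : ∀ x v, ⟪B x, B v⟫ = ⟪x, A v⟫ := by
    intro x v
    nth_rewrite 1 [← hBa]
    rw [adjoint_inner_left, hBB]
  have hnorm2 : ∀ u, ‖B u‖ ^ 2 = RCLike.re ⟪u, A u⟫ := by
    intro u
    rw [← inner_self_eq_norm_sq (𝕜 := ℂ), hBxBv]
  -- construction of W
  have hchoice : ∀ x : H, ∃ z, A z = ContinuousLinearMap.adjoint S (A x) := fun x =>
    hS (Set.mem_range_self x)
  set P := Submodule.orthogonalProjection (rangeClosure A) with hPdef
  set f : H → H := fun x => (P (Classical.choose (hchoice x)) : H) with hfdef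
  have hfmem : ∀ x, f x ∈ rangeClosure A := fun x => (P _).2
  have hfA : ∀ x, A (f x) = ContinuousLinearMap.adjoint S (A x) := by
    intro x
    have hz := Classical.choose_spec (hchoice x)
    set z := Classical.choose (hchoice x) with hzdef
    have hv : z - (P z : H) ∈ (rangeClosure A)ᗮ := Submodule.sub_starProjection_mem_orthogonal z
    have h1 : A (z - (P z : H)) = 0 := apply_eq_zero_of_orthogonal A hAa hv
    rw [map_sub, sub_eq_zero] at h1
    show A (P z : H) = _
    rw [← h1, hz]
  have huniq : ∀ w w', w ∈ rangeClosure A → w' ∈ rangeClosure A → A w = A w' → w = w' := by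
    intro w w' hw hw' hww
    have h1 : w - w' = 0 := by
      refine rangeClosure_inj A hAa (sub_mem hw hw') ?_
      rw [map_sub, hww, sub_self]
    exact sub_eq_zero.1 h1
  set W₀ : H →ₗ[ℂ] H :=
    { toFun := f
      map_add' := by
        intro x y
        refine huniq _ _ (hfmem _) (add_mem (hfmem x) (hfmem y)) ?_
        rw [map_add, hfA, hfA, hfA, map_add, map_add]
      map_smul' := by
        intro c x
        refine huniq _ _ (hfmem _) (Submodule.smul_mem _ c (hfmem x)) ?_
        rw [map_smul, hfA, hfA, map_smul, map_smul]
        rfl } with hW₀def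
  have hW₀f : ∀ x, W₀ x = f x := fun x => rfl
  have hcont : Continuous W₀ := by
    apply W₀.continuous_of_seq_closed_graph
    intro u x y hu hgu
    have h1 : Filter.Tendsto (fun n => A (f (u n))) Filter.atTop (nhds (A y)) :=
      (A.continuous.tendsto y).comp hgu
    have h2 : (fun n => A (f (u n))) = fun n => ContinuousLinearMap.adjoint S (A (u n)) :=
      funext fun n => hfA (u n)
    have h3 : Filter.Tendsto (fun n => ContinuousLinearMap.adjoint S (A (u n)))
        Filter.atTop (nhds (ContinuousLinearMap.adjoint S (A x))) :=
      ((ContinuousLinearMap.adjoint S).continuous.tendsto _).comp ((A.continuous.tendsto x).comp hu)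
    have h4 : A y = ContinuousLinearMap.adjoint S (A x) := tendsto_nhds_unique (h2 ▸ h1) h3
    have h5 : y ∈ rangeClosure A := by
      refine (Submodule.isClosed_topologicalClosure _).mem_of_tendsto hgu ?_
      exact Filter.Eventually.of_forall fun n => hfmem (u n)
    exact huniq y (f x) h5 (hfmem x) (by rw [h4, hfA])
  set W : H →L[ℂ] H := ⟨W₀, hcont⟩ with hWdef
  set R : H →L[ℂ] H := W ∘L S with hRdef
  have hAR : ∀ x, A (R x) = ContinuousLinearMap.adjoint S (A (S x)) := fun x => hfA (S x)
  have hop : A ∘L R = ContinuousLinearMap.adjoint S ∘L (A ∘L S) := by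
    ext x
    simpa using hAR x
  have hsym : ContinuousLinearMap.adjoint R ∘L A = A ∘L R := by
    have h6 : ContinuousLinearMap.adjoint (A ∘L R) = ContinuousLinearMap.adjoint R ∘L A := by
      rw [adjoint_comp, hAa]
    rw [← h6, hop, adjoint_comp, adjoint_comp, adjoint_adjoint, hAa]
    ext x
    simp
  have hRsa1 : ∀ x, ContinuousLinearMap.adjoint R (A x) = A (R x) := by
    intro x
    simpa using DFunLike.congr_fun hsym x
  have hpow : ∀ (n : ℕ) (x : H),
      ((ContinuousLinearMap.adjoint R) ^ n) (A x) = A ((R ^ n) x) := by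
    intro n
    induction n with
    | zero => intro x; simp
    | succ n ih =>
      intro x
      rw [pow_succ, pow_succ, ContinuousLinearMap.mul_apply, ContinuousLinearMap.mul_apply,
        hRsa1, ih (R x)]
  have hquad : ∀ (m : ℕ) (x : H),
      ‖B ((R ^ m) x)‖ ^ 2 ≤ ‖B x‖ * ‖B ((R ^ (m + m)) x)‖ := by
    intro m x
    have h1 : ⟪(R ^ m) x, A ((R ^ m) x)⟫ = ⟪x, A ((R ^ (m + m)) x)⟫ := by
      rw [← adjoint_inner_right, ← star_eq_adjoint, star_pow, star_eq_adjoint, hpow]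
      congr 1
      rw [pow_add, ContinuousLinearMap.mul_apply]
    rw [hnorm2, h1, ← hBxBv]
    exact re_inner_le_norm (𝕜 := ℂ) _ _
  set M : ℝ := ‖R‖ + 1 with hMdef
  have hM : 0 < M := by positivity
  have hM1 : ‖R‖ ≤ M := by linarith
  have hRbound : ∀ x, ‖B (R x)‖ ≤ M * ‖B x‖ := by
    intro x
    by_contra hcon
    push_neg at hcon
    set a := ‖B (R x)‖ with hadef
    set b := ‖B x‖ with hbdef
    have ha0 : 0 < a := lt_of_le_of_lt (by positivity) hcon
    rcases eq_or_lt_of_le (norm_nonneg (B x)) with hb | hb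
    · -- b = 0
      have h1 := hquad 1 x
      rw [pow_one] at h1
      have hb0 : ‖B x‖ = 0 := hb.symm
      rw [hb0, zero_mul] at h1
      nlinarith [h1, hadef, ha0]
    · -- 0 < b
      have hiter : ∀ n : ℕ, a ^ 2 ^ n * b ≤ ‖B ((R ^ 2 ^ n) x)‖ * b ^ 2 ^ n := by
        intro n
        induction n with
        | zero => simp [pow_one, hadef]
        | succ n ih =>
          set X := ‖B ((R ^ 2 ^ n) x)‖ with hXdef
          set Y := ‖B ((R ^ 2 ^ (n + 1)) x)‖ with hYdef
          have h1 : X ^ 2 ≤ b * Y := by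
            have := hquad (2 ^ n) x
            rwa [show 2 ^ n + 2 ^ n = 2 ^ (n + 1) by rw [pow_succ, mul_two]] at this
          have hsq : (a ^ 2 ^ n * b) * (a ^ 2 ^ n * b) ≤ (X * b ^ 2 ^ n) * (X * b ^ 2 ^ n) :=
            mul_self_le_mul_self (by positivity) ih
          have e1 : (a ^ 2 ^ n * b) * (a ^ 2 ^ n * b) = a ^ 2 ^ (n + 1) * b * b := by
            rw [show 2 ^ (n + 1) = 2 ^ n + 2 ^ n by rw [pow_succ, mul_two], pow_add]; ring
          have e2 : (X * b ^ 2 ^ n) * (X * b ^ 2 ^ n) = X ^ 2 * b ^ (2 ^ (n + 1)) := by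
            rw [show 2 ^ (n + 1) = 2 ^ n + 2 ^ n by rw [pow_succ, mul_two], pow_add]; ring
          have h2 : a ^ 2 ^ (n + 1) * b * b ≤ (Y * b ^ 2 ^ (n + 1)) * b := by
            rw [← e1]
            refine hsq.trans ?_
            rw [e2]
            calc X ^ 2 * b ^ 2 ^ (n + 1) ≤ (b * Y) * b ^ 2 ^ (n + 1) := by
                  exact mul_le_mul_of_nonneg_right h1 (by positivity)
              _ = Y * b ^ 2 ^ (n + 1) * b := by ring
          exact le_of_mul_le_mul_right h2 hb
      have hXn : ∀ n : ℕ, ‖B ((R ^ 2 ^ n) x)‖ ≤ ‖B‖ * ‖x‖ * M ^ 2 ^ n := by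
        intro n
        calc ‖B ((R ^ 2 ^ n) x)‖ ≤ ‖B‖ * ‖(R ^ 2 ^ n) x‖ := ContinuousLinearMap.le_opNorm _ _
          _ ≤ ‖B‖ * (‖R ^ 2 ^ n‖ * ‖x‖) := by
              exact mul_le_mul_of_nonneg_left (ContinuousLinearMap.le_opNorm _ _) (norm_nonneg _)
          _ ≤ ‖B‖ * (‖R‖ ^ 2 ^ n * ‖x‖) := by
              refine mul_le_mul_of_nonneg_left (mul_le_mul_of_nonneg_right ?_ (norm_nonneg _))
                (norm_nonneg _)
              exact norm_pow_le' R (Nat.pow_pos (by norm_num))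
          _ ≤ ‖B‖ * (M ^ 2 ^ n * ‖x‖) := by
              refine mul_le_mul_of_nonneg_left (mul_le_mul_of_nonneg_right ?_ (norm_nonneg _))
                (norm_nonneg _)
              exact pow_le_pow_left₀ (norm_nonneg _) hM1 _
          _ = ‖B‖ * ‖x‖ * M ^ 2 ^ n := by ring
      set C : ℝ := ‖B‖ * ‖x‖ with hCdef
      set r : ℝ := a / (M * b) with hrdef
      have hMb : 0 < M * b := by positivity
      have hr : 1 < r := (one_lt_div hMb).2 hcon
      have har : a = r * (M * b) := by
        rw [hrdef, div_mul_cancel₀ _ (ne_of_gt hMb)]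
      obtain ⟨n, hn⟩ := pow_unbounded_of_one_lt (C / b) hr
      have hkey : r ^ 2 ^ n * b ≤ C := by
        have h1 := (hiter n).trans (mul_le_mul_of_nonneg_right (hXn n) (by positivity))
        have e1 : a ^ 2 ^ n * b = (r ^ 2 ^ n * b) * (M ^ 2 ^ n * b ^ 2 ^ n) := by
          rw [har, mul_pow, mul_pow]; ring
        have e2 : ‖B‖ * ‖x‖ * M ^ 2 ^ n * b ^ 2 ^ n = C * (M ^ 2 ^ n * b ^ 2 ^ n) := by
          rw [hCdef]; ring
        rw [e1, e2] at h1
        exact le_of_mul_le_mul_right h1 (by positivity)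
      have hfin : r ^ 2 ^ n ≤ C / b := (le_div_iff₀ hb).2 hkey
      have h2le : r ^ n ≤ r ^ 2 ^ n :=
        pow_le_pow_right₀ (le_of_lt hr) (Nat.lt_two_pow_self (n := n)).le
      linarith
  -- final bound
  have hSb : ∀ x, ‖B (S x)‖ ^ 2 ≤ M * ‖B x‖ ^ 2 := by
    intro x
    have h1 : ⟪S x, A (S x)⟫ = ⟪x, A (R x)⟫ := by
      rw [← adjoint_inner_right, hAR]
    have h2 : ‖B (S x)‖ ^ 2 = RCLike.re ⟪B x, B (R x)⟫ := by
      rw [hnorm2, h1, ← hBxBv]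
    calc ‖B (S x)‖ ^ 2 = RCLike.re ⟪B x, B (R x)⟫ := h2
      _ ≤ ‖B x‖ * ‖B (R x)‖ := re_inner_le_norm (𝕜 := ℂ) _ _
      _ ≤ ‖B x‖ * (M * ‖B x‖) := mul_le_mul_of_nonneg_left (hRbound x) (norm_nonneg _)
      _ = M * ‖B x‖ ^ 2 := by ring
  refine ⟨Real.sqrt M, Real.sqrt_pos.2 hM, fun x => ?_⟩
  rw [hanorm, hanorm]
  have h1 : ‖B (S x)‖ = Real.sqrt (‖B (S x)‖ ^ 2) := (Real.sqrt_sq (norm_nonneg _)).symm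
  rw [h1]
  calc Real.sqrt (‖B (S x)‖ ^ 2) ≤ Real.sqrt (M * ‖B x‖ ^ 2) := Real.sqrt_le_sqrt (hSb x)
    _ = Real.sqrt M * ‖B x‖ := by
        rw [Real.sqrt_mul (le_of_lt hM), Real.sqrt_sq (norm_nonneg _)]

/-- if `T ∈ B_A(H)` is `A`-invertible in `B_A(H)` with `A`-inverse `S`,
then `γ_A(T) ≥ 1/‖S‖_A > 0`. -/
theorem stmt0 (A T S : H →L[ℂ] H) (hA : A.IsPositive) (hA0 : A ≠ 0)
    (hT : MemBA A T) (hS : MemBA A S) (hS0 : S ≠ 0)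
    (h1 : A ∘L T ∘L S = A) (h2 : A ∘L S ∘L T = A) :
    0 < 1 / AopnormCl A S ∧ 1 / AopnormCl A S ≤ gammaA A T := by
  classical
  have h0 : 0 ≤ A := (ContinuousLinearMap.nonneg_iff_isPositive A).2 hA
  set B := CFC.sqrt A with hBdef
  have hBmul : B * B = A := CFC.sqrt_mul_sqrt_self A h0
  have hBB : ∀ x, B (B x) = A x := fun x => by rw [← hBmul]; rfl
  have hBa : ContinuousLinearMap.adjoint B = B :=
    isSelfAdjoint_iff'.1 (IsSelfAdjoint.of_nonneg (CFC.sqrt_nonneg A))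
  have hAa : ContinuousLinearMap.adjoint A = A := isSelfAdjoint_iff'.1 hA.isSelfAdjoint
  have hanorm : ∀ x, anorm A x = ‖B x‖ := anorm_eq A B hBB hBa
  have hBxBv : ∀ x v, ⟪B x, B v⟫ = ⟪x, A v⟫ := by
    intro x v
    nth_rewrite 1 [← hBa]
    rw [adjoint_inner_left, hBB]
  have hnorm2 : ∀ u, ‖B u‖ ^ 2 = RCLike.re ⟪u, A u⟫ := by
    intro u
    rw [← inner_self_eq_norm_sq (𝕜 := ℂ), hBxBv]
  obtain ⟨c, hc, hcb⟩ := abound A S hA hS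
  have hcb' : ∀ x, ‖B (S x)‖ ≤ c * ‖B x‖ := by
    intro x
    have h3 := hcb x
    rwa [hanorm, hanorm] at h3
  have hST : ∀ x, A (S (T x)) = A x := by
    intro x
    have h3 := DFunLike.congr_fun h2 x
    simpa using h3
  set SS : Set ℝ := {r | ∃ ξ ∈ closure (Set.range A), anorm A ξ ≤ 1 ∧ r = anorm A (S ξ)}
    with hSSdef
  have hAop : AopnormCl A S = sSup SS := rfl
  have hbdd : BddAbove SS := by
    refine ⟨c, ?_⟩
    rintro r ⟨ξ, hξ, hξ1, rfl⟩
    rw [hanorm] at hξ1 ⊢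
    calc ‖B (S ξ)‖ ≤ c * ‖B ξ‖ := hcb' ξ
      _ ≤ c * 1 := by nlinarith
      _ = c := mul_one c
  have hclosure_eq : (rangeClosure A : Set H) = closure (Set.range ⇑A) := by
    rw [rangeClosure, Submodule.topologicalClosure_coe, LinearMap.coe_range,
      ContinuousLinearMap.coe_coe]
  have hkey : ∀ ξ : H, ‖B ξ‖ = 1 →
      0 < ‖B (T ξ)‖ ∧ ∃ r ∈ SS, 1 / ‖B (T ξ)‖ ≤ r := by
    intro ξ hξ
    have hstep1 : 1 ≤ ‖B (S (T ξ))‖ := by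
      have e1 : RCLike.re ⟪B ξ, B (S (T ξ))⟫ = 1 := by
        rw [hBxBv, hST, ← hnorm2, hξ]; norm_num
      calc (1 : ℝ) = RCLike.re ⟪B ξ, B (S (T ξ))⟫ := e1.symm
        _ ≤ ‖B ξ‖ * ‖B (S (T ξ))‖ := re_inner_le_norm (𝕜 := ℂ) _ _
        _ = ‖B (S (T ξ))‖ := by rw [hξ, one_mul]
    have ht : 0 < ‖B (T ξ)‖ := by
      rcases eq_or_lt_of_le (norm_nonneg (B (T ξ))) with h | h
      · exfalso
        have h3 := hcb' (T ξ)
        rw [← h, mul_zero] at h3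
        nlinarith
      · exact h
    refine ⟨ht, ?_⟩
    set w : H := (Submodule.orthogonalProjection (rangeClosure A) (T ξ) : H) with hwdef
    have hv : T ξ - w ∈ (rangeClosure A)ᗮ := Submodule.sub_starProjection_mem_orthogonal (T ξ)
    have hAv : A (T ξ - w) = 0 := apply_eq_zero_of_orthogonal A hAa hv
    have hBv : B (T ξ - w) = 0 := B_eq_zero_of_apply_eq_zero A B hBB hBa hAv
    have hBSv : B (S (T ξ - w)) = 0 := by
      have h3 := hcb' (T ξ - w)
      rw [hBv, norm_zero, mul_zero] at h3
      exact norm_eq_zero.1 (le_antisymm h3 (norm_nonneg _))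
    have hBw : B w = B (T ξ) := by
      rw [map_sub] at hBv
      exact (sub_eq_zero.1 hBv).symm
    have hBSw : B (S w) = B (S (T ξ)) := by
      rw [map_sub, map_sub] at hBSv
      exact (sub_eq_zero.1 hBSv).symm
    set t : ℝ := ‖B (T ξ)‖ with htdef
    set η : H := ((t : ℂ))⁻¹ • w with hηdef
    have hηmem : η ∈ closure (Set.range ⇑A) := by
      rw [← hclosure_eq]
      exact Submodule.smul_mem _ _ (SetLike.coe_mem _)
    have hηnorm : anorm A η = 1 := by
      rw [hanorm, hηdef, map_smul, norm_smul, hBw, norm_inv, Complex.norm_real,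
        Real.norm_eq_abs, abs_of_pos ht, ← htdef, inv_mul_cancel₀ (ne_of_gt ht)]
    refine ⟨anorm A (S η), ⟨η, hηmem, le_of_eq hηnorm, rfl⟩, ?_⟩
    rw [hanorm, hηdef, map_smul, map_smul, norm_smul, hBSw, norm_inv, Complex.norm_real,
      Real.norm_eq_abs, abs_of_pos ht, one_div]
    calc t⁻¹ = t⁻¹ * 1 := (mul_one _).symm
      _ ≤ t⁻¹ * ‖B (S (T ξ))‖ := by
          exact mul_le_mul_of_nonneg_left hstep1 (by positivity)
  obtain ⟨x0, hx0⟩ : ∃ x, A x ≠ 0 := by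
    by_contra h
    push_neg at h
    exact hA0 (ContinuousLinearMap.ext fun x => by simp [h x])
  have hBx0 : ‖B x0‖ ≠ 0 := by
    intro h
    exact hx0 (by rw [← hBB, norm_eq_zero.1 h, map_zero])
  set ξ0 : H := ((‖B x0‖ : ℂ))⁻¹ • x0 with hξ0def
  have hξ0 : ‖B ξ0‖ = 1 := by
    rw [hξ0def, map_smul, norm_smul, norm_inv, Complex.norm_real, Real.norm_eq_abs,
      abs_of_nonneg (norm_nonneg _), inv_mul_cancel₀ hBx0]
  obtain ⟨ht0, r0, hr0mem, hr0⟩ := hkey ξ0 hξ0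
  have hsup_pos : 0 < sSup SS :=
    lt_of_lt_of_le (by positivity) (hr0.trans (le_csSup hbdd hr0mem))
  have hsup_pos' : 0 < AopnormCl A S := by rw [hAop]; exact hsup_pos
  constructor
  · exact one_div_pos.2 hsup_pos'
  · have hcond : ∀ ξ0' y : H, anorm A (T y) = 0 → (inner ℂ (A ξ0') y : ℂ) = 0 := by
      intro ξ' y hy
      have hBTy : B (T y) = 0 := by
        rw [hanorm] at hy
        exact norm_eq_zero.1 hy
      have hBSTy : B (S (T y)) = 0 := by
        have h3 := hcb' (T y)
        rw [hBTy, norm_zero, mul_zero] at h3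
        exact norm_eq_zero.1 (le_antisymm h3 (norm_nonneg _))
      have hAy : A y = 0 := by
        have h3 : ‖B y‖ ^ 2 = RCLike.re ⟪B y, B (S (T y))⟫ := by
          rw [hBxBv, hST, ← hnorm2]
        rw [hBSTy, inner_zero_right, map_zero] at h3
        have h4 : B y = 0 := by
          rw [← norm_eq_zero]
          nlinarith [norm_nonneg (B y), h3]
        rw [← hBB, h4, map_zero]
      have h5 : ⟪A ξ', y⟫ = ⟪ξ', A y⟫ := by
        nth_rewrite 1 [← hAa]
        rw [adjoint_inner_left]
      rw [h5, hAy, inner_zero_right]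
    apply le_csInf
    · exact ⟨anorm A (T ξ0), ξ0, hcond ξ0, by rw [hanorm, hξ0], rfl⟩
    · rintro r ⟨ξ, -, hξ1, rfl⟩
      have hξB : ‖B ξ‖ = 1 := by rw [← hanorm]; exact hξ1
      obtain ⟨ht, s, hsmem, hs⟩ := hkey ξ hξB
      have hssup : 1 / ‖B (T ξ)‖ ≤ sSup SS := hs.trans (le_csSup hbdd hsmem)
      rw [hanorm, hAop]
      exact (one_div_le hsup_pos ht).2 hssup
end

section
/- Let A be a positive semidefinite bounded operator on a Hilbert space H and T ∈ B_{A^{1/2}}(H). Then σ_{(A⊗A),app}(T⊗I) = σ_{A,app}(T), and likewise σ_{(A⊗A),app}(I⊗T) = σ_{A,app}(T). -/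
open Filter Topology ContinuousLinearMap

variable {H : Type*} [NormedAddCommGroup H] [InnerProductSpace ℂ H] [CompleteSpace H]

/-! ### Auxiliary lemmas for stmt17 -/

section Stmt17Aux

lemma stmt17_exists_sqrt (A : H →L[ℂ] H) (hA : A.IsPositive) :
    ∃ R : H →L[ℂ] H, IsSelfAdjoint R ∧ R * R = A := by
  have h0 : (0:H→L[ℂ]H) ≤ A := (ContinuousLinearMap.nonneg_iff_isPositive _).mpr hA
  exact ⟨CFC.sqrt A, IsSelfAdjoint.of_nonneg (CFC.sqrt_nonneg A), CFC.sqrt_mul_sqrt_self A h0⟩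

lemma stmt17_sqrt_inner {A R : H →L[ℂ] H} (hR : IsSelfAdjoint R) (hRR : R * R = A)
    (x y : H) : (inner ℂ (A x) y : ℂ) = inner ℂ (R x) (R y) := by
  have : A x = R (R x) := by rw [← hRR]; rfl
  rw [this, ← ContinuousLinearMap.adjoint_inner_right, hR.adjoint_eq]

lemma stmt17_sqrt_anorm {A R : H →L[ℂ] H} (hR : IsSelfAdjoint R) (hRR : R * R = A)
    (x : H) : anorm A x = ‖R x‖ := by
  rw [anorm, stmt17_sqrt_inner hR hRR]
  have h := inner_self_eq_norm_sq (𝕜 := ℂ) (R x)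
  rw [RCLike.re_to_complex] at h
  rw [h]
  exact Real.sqrt_sq (norm_nonneg _)

lemma stmt17_anorm_nonneg (A : H →L[ℂ] H) (x : H) : 0 ≤ anorm A x := Real.sqrt_nonneg _

/-- If `lam` is not in the approximate point A-spectrum then `T - lam` is A-bounded below. -/
lemma stmt17_anorm_bound_of_not_mem {A T : H →L[ℂ] H} (hA : A.IsPositive) {lam : ℂ}
    (h : lam ∉ sigmaAapp A T) :
    ∃ c > 0, ∀ x : H, c * anorm A x ≤ anorm A (T x - lam • x) := by
  obtain ⟨R, hR, hRR⟩ := stmt17_exists_sqrt A hA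
  by_contra h'
  push_neg at h'
  have hseq : ∀ n : ℕ, ∃ x : H, anorm A x = 1 ∧
      anorm A (T x - lam • x) < 1 / (n + 1) := by
    intro n
    obtain ⟨x, hx⟩ := h' (1 / (n + 1)) (by positivity)
    have hpos : 0 < anorm A x := by
      rcases lt_or_ge 0 (anorm A x) with h1 | h1
      · exact h1
      · exfalso
        have h2 : anorm A x = 0 := le_antisymm h1 (stmt17_anorm_nonneg A x)
        have := stmt17_anorm_nonneg A (T x - lam • x)
        rw [h2] at hx; linarith [hx]
    refine ⟨((anorm A x : ℂ))⁻¹ • x, ?_, ?_⟩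
    · rw [stmt17_sqrt_anorm hR hRR, map_smul, norm_smul, ← stmt17_sqrt_anorm hR hRR (x := x)]
      rw [norm_inv]
      simp only [Complex.norm_real, Real.norm_eq_abs, abs_of_pos hpos]
      field_simp
    · have heq : T (((anorm A x : ℂ))⁻¹ • x) - lam • ((anorm A x : ℂ))⁻¹ • x
          = ((anorm A x : ℂ))⁻¹ • (T x - lam • x) := by
        rw [map_smul, smul_sub, smul_comm]
      rw [heq, stmt17_sqrt_anorm hR hRR, map_smul, norm_smul, ← stmt17_sqrt_anorm hR hRR]
      rw [norm_inv]
      simp only [Complex.norm_real, Real.norm_eq_abs, abs_of_pos hpos]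
      rw [inv_mul_lt_iff₀ hpos]
      calc anorm A (T x - lam • x) < 1 / (n + 1) * anorm A x := hx
        _ = anorm A x * (1 / (n+1)) := by ring
  choose x hx1 hx2 using hseq
  refine h ⟨x, hx1, ?_⟩
  apply squeeze_zero (fun n => stmt17_anorm_nonneg _ _) (fun n => le_of_lt (hx2 n))
  exact tendsto_one_div_add_atTop_nhds_zero_nat

lemma stmt17_not_mem_of_anorm_bound {A T : H →L[ℂ] H} {lam : ℂ} {c : ℝ} (hc : 0 < c)
    (hb : ∀ x : H, c * anorm A x ≤ anorm A (T x - lam • x)) :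
    lam ∉ sigmaAapp A T := by
  rintro ⟨x, hx1, hx2⟩
  have hle : ∀ n, c ≤ anorm A (T (x n) - lam • x n) := fun n => by
    have := hb (x n); rw [hx1 n, mul_one] at this; exact this
  have : c ≤ 0 := ge_of_tendsto' hx2 hle
  linarith

end Stmt17Aux

section Stmt17Tensor
open Finset
variable {K : Type*} [NormedAddCommGroup K] [InnerProductSpace ℂ K] [CompleteSpace K]

set_option maxHeartbeats 1000000 in
lemma stmt17_tensor_lb (A T : H →L[ℂ] H)
    {R : H →L[ℂ] H} (hR : IsSelfAdjoint R) (hRR : R * R = A)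
    (tmul : H →ₗ[ℂ] H →ₗ[ℂ] K)
    (hinner : ∀ (x x' y y' : H),
      (inner ℂ (tmul x y) (tmul x' y') : ℂ) = (inner ℂ x x' : ℂ) * (inner ℂ y y' : ℂ))
    (hdense : (Submodule.span ℂ {z : K | ∃ x y, z = tmul x y}).topologicalClosure = ⊤)
    (TI AA : K →L[ℂ] K)
    {S : K →L[ℂ] K} (hS : IsSelfAdjoint S) (hSS : S * S = AA)
    (hTI : ∀ x y : H, TI (tmul x y) = tmul (T x) y)
    (hAA : ∀ x y : H, AA (tmul x y) = tmul (A x) (A y))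
    (lam : ℂ) (c : ℝ) (hc : 0 < c)
    (hlow : ∀ x : H, c * ‖R x‖ ≤ ‖R (T x - lam • x)‖) :
    ∀ z : K, c * ‖S z‖ ≤ ‖S (TI z - lam • z)‖ := by
  -- inner product identities
  have hAin : ∀ x y : H, (inner ℂ (A x) y : ℂ) = inner ℂ (R x) (R y) := fun x y => by
    have : A x = R (R x) := by rw [← hRR]; rfl
    rw [this, ← ContinuousLinearMap.adjoint_inner_right, hR.adjoint_eq]
  have hAAin : ∀ u v : K, (inner ℂ (AA u) v : ℂ) = inner ℂ (S u) (S v) := fun u v => by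
    have : AA u = S (S u) := by rw [← hSS]; rfl
    rw [this, ← ContinuousLinearMap.adjoint_inner_right, hS.adjoint_eq]
  -- null vectors in second slot are killed by S
  have hnull : ∀ x w : H, R w = 0 → S (tmul x w) = 0 := by
    intro x w hw
    have h0 : (inner ℂ (S (tmul x w)) (S (tmul x w)) : ℂ) = 0 := by
      rw [← hAAin, hAA, hinner, hAin x x, hAin w w, hw]
      simp
    exact inner_self_eq_zero.mp h0
  -- the key finite-sum inequality
  have key : ∀ (n : ℕ) (x y : Fin n → H),
      c * ‖S (∑ i, tmul (x i) (y i))‖ ≤ ‖S (∑ i, tmul (T (x i) - lam • x i) (y i))‖ := by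
    intro n x y
    set W : Submodule ℂ H := Submodule.span ℂ (R '' Set.range y) with hW
    haveI : FiniteDimensional ℂ W := FiniteDimensional.span_of_finite ℂ ((Set.finite_range y).image R)
    let b := stdOrthonormalBasis ℂ W
    -- pull back basis vectors through R
    have hbmem : ∀ j, ((b j : H)) ∈ Submodule.map (R : H →ₗ[ℂ] H) (Submodule.span ℂ (Set.range y)) := by
      intro j
      rw [Submodule.map_span]
      exact (b j).2
    choose e he heq using fun j => Submodule.mem_map.mp (hbmem j)
    have heq' : ∀ j, R (e j) = ((b j : H)) := fun j => heq j
    -- orthonormality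
    have hon : ∀ j k, (inner ℂ (R (e j)) (R (e k)) : ℂ) = if j = k then 1 else 0 := by
      intro j k
      rw [heq' j, heq' k]
      have hbon := b.orthonormal
      rw [orthonormal_iff_ite] at hbon
      have := hbon j k
      rwa [Submodule.coe_inner] at this
    -- membership of R (y i) in W
    have hyW : ∀ i, R (y i) ∈ W := fun i =>
      Submodule.subset_span ⟨y i, Set.mem_range_self i, rfl⟩
    set cf : Fin n → Fin (Module.finrank ℂ W) → ℂ :=
      fun i j => b.repr ⟨R (y i), hyW i⟩ j with hcf
    have hexp : ∀ i, R (y i) = ∑ j, cf i j • R (e j) := by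
      intro i
      have hsum := b.sum_repr ⟨R (y i), hyW i⟩
      have : ((∑ j, b.repr ⟨R (y i), hyW i⟩ j • b j : W) : H) = R (y i) := by rw [hsum]
      rw [← this]
      push_cast
      exact Finset.sum_congr rfl fun j _ => by rw [heq' j]
    have hnulli : ∀ i, R (y i - ∑ j, cf i j • e j) = 0 := by
      intro i
      rw [map_sub, map_sum]
      simp_rw [map_smul]
      rw [← hexp i, sub_self]
    -- the algebraic regrouping
    have halg : ∀ v : Fin n → H,
        S (∑ i, tmul (v i) (y i)) = S (∑ j, tmul (∑ i, cf i j • v i) (e j)) := by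
      intro v
      have hdiff : (∑ i, tmul (v i) (y i)) - (∑ j, tmul (∑ i, cf i j • v i) (e j))
          = ∑ i, tmul (v i) (y i - ∑ j, cf i j • e j) := by
        have h1 : ∀ i, tmul (v i) (y i - ∑ j, cf i j • e j)
            = tmul (v i) (y i) - ∑ j, cf i j • tmul (v i) (e j) := by
          intro i
          rw [map_sub, map_sum]
          simp_rw [map_smul]
        have h2 : ∀ j, tmul (∑ i, cf i j • v i) (e j)
            = ∑ i, cf i j • tmul (v i) (e j) := by
          intro j
          simp only [map_sum, map_smul, LinearMap.coe_sum, Finset.sum_apply,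
            LinearMap.smul_apply]
        simp_rw [h1, h2, Finset.sum_sub_distrib]
        rw [Finset.sum_comm]
      have : S ((∑ i, tmul (v i) (y i)) - (∑ j, tmul (∑ i, cf i j • v i) (e j))) = 0 := by
        rw [hdiff, map_sum]
        exact Finset.sum_eq_zero fun i _ => hnull _ _ (hnulli i)
      rw [map_sub, sub_eq_zero] at this
      exact this
    -- norm computation
    have hnorm : ∀ w : Fin (Module.finrank ℂ W) → H,
        ‖S (∑ j, tmul (w j) (e j))‖ ^ 2 = ∑ j, ‖R (w j)‖ ^ 2 := by
      intro w
      have h1 : (inner ℂ (S (∑ j, tmul (w j) (e j))) (S (∑ j, tmul (w j) (e j))) : ℂ)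
          = ∑ j, ∑ k, (inner ℂ (R (w j)) (R (w k)) : ℂ) * (inner ℂ (R (e j)) (R (e k)) : ℂ) := by
        rw [← hAAin, map_sum]
        rw [sum_inner]
        refine Finset.sum_congr rfl fun j _ => ?_
        rw [inner_sum]
        refine Finset.sum_congr rfl fun k _ => ?_
        rw [hAA, hinner, hAin, hAin]
      have h2 : (inner ℂ (S (∑ j, tmul (w j) (e j))) (S (∑ j, tmul (w j) (e j))) : ℂ)
          = ∑ j, (inner ℂ (R (w j)) (R (w j)) : ℂ) := by
        rw [h1]
        refine Finset.sum_congr rfl fun j _ => ?_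
        rw [Finset.sum_eq_single j]
        · rw [hon, if_pos rfl, mul_one]
        · intro k _ hk
          rw [hon, if_neg (Ne.symm hk), mul_zero]
        · intro h; exact absurd (Finset.mem_univ j) h
      have h3 := congrArg Complex.re h2
      rw [show (inner ℂ (S (∑ j, tmul (w j) (e j))) (S (∑ j, tmul (w j) (e j))) : ℂ).re
          = ‖S (∑ j, tmul (w j) (e j))‖ ^ 2 by
        have h := inner_self_eq_norm_sq (𝕜 := ℂ) (S (∑ j, tmul (w j) (e j)))
        rw [RCLike.re_to_complex] at h; exact h] at h3
      rw [h3, Complex.re_sum]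
      refine Finset.sum_congr rfl fun j _ => ?_
      have h := inner_self_eq_norm_sq (𝕜 := ℂ) (R (w j))
      rw [RCLike.re_to_complex] at h; exact h
    -- apply halg on both sides
    rw [halg x, halg (fun i => T (x i) - lam • x i)]
    have hu : ∀ j, (∑ i, cf i j • (T (x i) - lam • x i))
        = T (∑ i, cf i j • x i) - lam • (∑ i, cf i j • x i) := by
      intro j
      rw [map_sum, Finset.smul_sum, ← Finset.sum_sub_distrib]
      refine Finset.sum_congr rfl fun i _ => ?_
      rw [map_smul, smul_sub, smul_comm lam (cf i j)]
    simp_rw [hu]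
    set u : Fin (Module.finrank ℂ W) → H := fun j => ∑ i, cf i j • x i with huu
    -- squared inequality
    have hsq : (c * ‖S (∑ j, tmul (u j) (e j))‖) ^ 2
        ≤ ‖S (∑ j, tmul (T (u j) - lam • u j) (e j))‖ ^ 2 := by
      rw [mul_pow, hnorm u, hnorm (fun j => T (u j) - lam • u j), Finset.mul_sum]
      refine Finset.sum_le_sum fun j _ => ?_
      have := hlow (u j)
      calc c ^ 2 * ‖R (u j)‖ ^ 2 = (c * ‖R (u j)‖) ^ 2 := by ring
        _ ≤ ‖R (T (u j) - lam • u j)‖ ^ 2 := by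
            apply pow_le_pow_left₀ (by positivity) this
    have h1 : 0 ≤ c * ‖S (∑ j, tmul (u j) (e j))‖ := by positivity
    exact (pow_le_pow_iff_left₀ h1 (norm_nonneg _) two_ne_zero).mp hsq
  -- extend to all z by density
  intro z
  set C : Set K := {z : K | c * ‖S z‖ ≤ ‖S (TI z - lam • z)‖} with hC
  have hclosed : IsClosed C := by
    apply isClosed_le
    · exact (continuous_const.mul (S.continuous.norm))
    · exact ((S.continuous.comp (TI.continuous.sub (continuous_id.const_smul lam))).norm)
  have hspan : (Submodule.span ℂ {z : K | ∃ x y, z = tmul x y} : Set K) ⊆ C := by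
    intro z hz
    rw [SetLike.mem_coe, Submodule.mem_span_set'] at hz
    obtain ⟨n, f, g, hg⟩ := hz
    choose xg yg hgs using fun i => (g i).2
    have hzrep : z = ∑ i, tmul (f i • xg i) (yg i) := by
      rw [← hg]
      refine Finset.sum_congr rfl fun i _ => ?_
      rw [hgs i, map_smul]
      rfl
    have hTIz : TI z - lam • z = ∑ i, tmul (T (f i • xg i) - lam • (f i • xg i)) (yg i) := by
      rw [hzrep, map_sum, Finset.smul_sum, ← Finset.sum_sub_distrib]
      refine Finset.sum_congr rfl fun i _ => ?_
      simp only [hTI, map_sub, map_smul, LinearMap.sub_apply, LinearMap.smul_apply]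
    show c * ‖S z‖ ≤ ‖S (TI z - lam • z)‖
    rw [hTIz, hzrep]
    exact key n (fun i => f i • xg i) yg
  have hzC : z ∈ C := by
    have hcl : closure (Submodule.span ℂ {z : K | ∃ x y, z = tmul x y} : Set K) ⊆ C :=
      closure_minimal hspan hclosed
    apply hcl
    have : z ∈ (Submodule.span ℂ {z : K | ∃ x y, z = tmul x y}).topologicalClosure := by
      rw [hdense]; trivial
    exact this
  exact hzC

end Stmt17Tensor

section Stmt17Easy
variable {K : Type*} [NormedAddCommGroup K] [InnerProductSpace ℂ K] [CompleteSpace K]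

lemma stmt17_subset_easy (A T : H →L[ℂ] H)
    {R : H →L[ℂ] H} (hR : IsSelfAdjoint R) (hRR : R * R = A) (hA0 : A ≠ 0)
    (tmul : H →ₗ[ℂ] H →ₗ[ℂ] K)
    (hinner : ∀ (x x' y y' : H),
      (inner ℂ (tmul x y) (tmul x' y') : ℂ) = (inner ℂ x x' : ℂ) * (inner ℂ y y' : ℂ))
    (TI AA : K →L[ℂ] K)
    {S : K →L[ℂ] K} (hS : IsSelfAdjoint S) (hSS : S * S = AA)
    (hTI : ∀ x y : H, TI (tmul x y) = tmul (T x) y)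
    (hAA : ∀ x y : H, AA (tmul x y) = tmul (A x) (A y)) :
    sigmaAapp A T ⊆ sigmaAapp AA TI := by
  have hAin : ∀ x y : H, (inner ℂ (A x) y : ℂ) = inner ℂ (R x) (R y) :=
    stmt17_sqrt_inner hR hRR
  -- anorm of an elementary tensor
  have hat : ∀ x y : H, anorm AA (tmul x y) = anorm A x * anorm A y := by
    intro x y
    rw [stmt17_sqrt_anorm hR hRR x, stmt17_sqrt_anorm hR hRR y, anorm]
    have h1 : (inner ℂ (AA (tmul x y)) (tmul x y) : ℂ).re = ‖R x‖^2 * ‖R y‖^2 := by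
      rw [hAA, hinner, hAin, hAin, Complex.mul_re]
      have hrx := inner_self_eq_norm_sq (𝕜 := ℂ) (R x)
      have hry := inner_self_eq_norm_sq (𝕜 := ℂ) (R y)
      rw [RCLike.re_to_complex] at hrx hry
      have hix : (inner ℂ (R x) (R x) : ℂ).im = 0 := by
        have := inner_self_im (𝕜 := ℂ) (x := R x); rwa [RCLike.im_to_complex] at this
      have hiy : (inner ℂ (R y) (R y) : ℂ).im = 0 := by
        have := inner_self_im (𝕜 := ℂ) (x := R y); rwa [RCLike.im_to_complex] at this
      rw [hrx, hry, hix, hiy]; ring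
    rw [h1, show ‖R x‖^2 * ‖R y‖^2 = (‖R x‖ * ‖R y‖)^2 by ring]
    exact Real.sqrt_sq (by positivity)
  -- a unit vector for the A-seminorm
  obtain ⟨e, he⟩ : ∃ e : H, anorm A e = 1 := by
    have hx : ∃ x : H, R x ≠ 0 := by
      by_contra h; push_neg at h
      apply hA0
      ext x
      have hax : A x = R (R x) := by rw [← hRR]; rfl
      simp [hax, h]
    obtain ⟨x, hx⟩ := hx
    refine ⟨(‖R x‖ : ℂ)⁻¹ • x, ?_⟩
    rw [stmt17_sqrt_anorm hR hRR, map_smul, norm_smul, norm_inv]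
    simp only [Complex.norm_real, Real.norm_eq_abs, abs_of_pos (norm_pos_iff.mpr hx)]
    rw [inv_mul_cancel₀ (norm_ne_zero_iff.mpr hx)]
  rintro lam ⟨x, hx1, hx2⟩
  refine ⟨fun n => tmul (x n) e, fun n => by rw [hat, hx1, he, mul_one], ?_⟩
  have heq : ∀ n, TI (tmul (x n) e) - lam • tmul (x n) e
      = tmul (T (x n) - lam • x n) e := by
    intro n
    simp only [hTI, map_sub, map_smul, LinearMap.sub_apply, LinearMap.smul_apply]
  have hfn : (fun n => anorm AA (TI (tmul (x n) e) - lam • tmul (x n) e))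
      = fun n => anorm A (T (x n) - lam • x n) := by
    funext n; rw [heq n, hat, he, mul_one]
  rw [hfn]
  exact hx2

end Stmt17Easy

variable {H₁ H₂ K : Type*} [NormedAddCommGroup H₁] [InnerProductSpace ℂ H₁] [CompleteSpace H₁]
  [NormedAddCommGroup H₂] [InnerProductSpace ℂ H₂] [CompleteSpace H₂]
  [NormedAddCommGroup K] [InnerProductSpace ℂ K] [CompleteSpace K]

/-- `σ_{A⊗A,app}(T ⊗ I) = σ_{A,app}(T)` and `σ_{A⊗A,app}(I ⊗ T) = σ_{A,app}(T)`,
with the Hilbert tensor product `K = H ⊗ H` axiomatized by a bilinear map `tmul` with the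
characteristic inner-product identity and dense span. -/
theorem stmt17 (A T : H →L[ℂ] H) (hA : A.IsPositive) (hA0 : A ≠ 0)
    (hT : MemBAhalf A T)
    (tmul : H →ₗ[ℂ] H →ₗ[ℂ] K)
    (hinner : ∀ (x x' y y' : H),
      (inner ℂ (tmul x y) (tmul x' y') : ℂ) = (inner ℂ x x' : ℂ) * (inner ℂ y y' : ℂ))
    (hdense : (Submodule.span ℂ {z : K | ∃ x y, z = tmul x y}).topologicalClosure = ⊤)
    (TI IT AA : K →L[ℂ] K) (hAApos : AA.IsPositive)
    (hTI : ∀ x y : H, TI (tmul x y) = tmul (T x) y)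
    (hIT : ∀ x y : H, IT (tmul x y) = tmul x (T y))
    (hAA : ∀ x y : H, AA (tmul x y) = tmul (A x) (A y)) :
    sigmaAapp AA TI = sigmaAapp A T ∧ sigmaAapp AA IT = sigmaAapp A T := by
  obtain ⟨R, hR, hRR⟩ := stmt17_exists_sqrt A hA
  obtain ⟨S, hS, hSS⟩ := stmt17_exists_sqrt AA hAApos
  -- flipped data for the I ⊗ T case
  have hinner' : ∀ (x x' y y' : H),
      (inner ℂ (tmul.flip x y) (tmul.flip x' y') : ℂ) = (inner ℂ x x' : ℂ) * (inner ℂ y y' : ℂ) := by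
    intro x x' y y'
    simp only [LinearMap.flip_apply]
    rw [hinner, mul_comm]
  have hsetflip : {z : K | ∃ x y, z = tmul.flip x y} = {z : K | ∃ x y, z = tmul x y} := by
    ext z
    constructor
    · rintro ⟨x, y, rfl⟩; exact ⟨y, x, by simp [LinearMap.flip_apply]⟩
    · rintro ⟨x, y, rfl⟩; exact ⟨y, x, by simp [LinearMap.flip_apply]⟩
  have hdense' : (Submodule.span ℂ {z : K | ∃ x y, z = tmul.flip x y}).topologicalClosure = ⊤ := by
    rw [hsetflip]; exact hdense
  have hIT' : ∀ x y : H, IT (tmul.flip x y) = tmul.flip (T x) y := by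
    intro x y; simp only [LinearMap.flip_apply]; exact hIT y x
  have hAA' : ∀ x y : H, AA (tmul.flip x y) = tmul.flip (A x) (A y) := by
    intro x y; simp only [LinearMap.flip_apply]; exact hAA y x
  have main : ∀ (TI' : K →L[ℂ] K) (tm : H →ₗ[ℂ] H →ₗ[ℂ] K)
      (hin : ∀ (x x' y y' : H),
        (inner ℂ (tm x y) (tm x' y') : ℂ) = (inner ℂ x x' : ℂ) * (inner ℂ y y' : ℂ))
      (hde : (Submodule.span ℂ {z : K | ∃ x y, z = tm x y}).topologicalClosure = ⊤)
      (hTI' : ∀ x y : H, TI' (tm x y) = tm (T x) y)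
      (hAA'' : ∀ x y : H, AA (tm x y) = tm (A x) (A y)),
      sigmaAapp AA TI' = sigmaAapp A T := by
    intro TI' tm hin hde hTI' hAA''
    apply Set.Subset.antisymm
    · intro lam hlam
      by_contra hnot
      obtain ⟨c, hc, hb⟩ := stmt17_anorm_bound_of_not_mem hA hnot
      have hb' : ∀ x : H, c * ‖R x‖ ≤ ‖R (T x - lam • x)‖ := by
        intro x
        have := hb x
        rwa [stmt17_sqrt_anorm hR hRR, stmt17_sqrt_anorm hR hRR] at this
      have hlb := stmt17_tensor_lb A T hR hRR tm hin hde TI' AA hS hSS hTI' hAA'' lam c hc hb'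
      have hlb' : ∀ z : K, c * anorm AA z ≤ anorm AA (TI' z - lam • z) := fun z => by
        rw [stmt17_sqrt_anorm hS hSS, stmt17_sqrt_anorm hS hSS]
        exact hlb z
      exact stmt17_not_mem_of_anorm_bound hc hlb' hlam
    · exact stmt17_subset_easy A T hR hRR hA0 tm hin TI' AA hS hSS hTI' hAA''
  exact ⟨main TI tmul hinner hdense hTI hAA, main IT tmul.flip hinner' hdense' hIT' hAA'⟩
end
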